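/- If all n agents' additive subjective utilities induce the same ranking over the m goods, then there always exists an allocation that is SD-EF1 with respect to all subjective utilities and SD-EF1 with respect to the additive market valuation. (The proof proceeds by decomposing an n-regular bipartite multigraph, whose edges are labeled by goods and whose vertices correspond to consecutive rank-blocks under the two rankings, into n perfect matchings.) -/
import Mathlib


open Finset

/-- `sdPair w X Y` : bundle `X` stochastically dominates `Y` minus some good,
under valuation `w` (the SD-EF1 condition for one ordered pair of agents). -/
def sdPair {M : Type*} [Fintype M] [DecidableEq M] (w : M → ℝ) (X Y : Finset M) : Prop :=
  Y = ∅ ∨ ∃ g ∈ Y, ∀ h : M,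
    ((Y.erase g).filter (fun x => w h ≤ w x)).card ≤ (X.filter (fun x => w h ≤ w x)).card

/-- An `n`-regular "bipartite multigraph" (edges `T`, endpoints `f x`, `g x`)
decomposes into `n` matchings (color classes of `a`). -/
lemma color_lemma {M : Type*} [DecidableEq M] {β γ : Type*} [DecidableEq β] [DecidableEq γ] :
    ∀ (n : ℕ) (T : Finset M) (f : M → β) (g : M → γ),
    (∀ x ∈ T, (T.filter (fun y => f y = f x)).card = n) →
    (∀ x ∈ T, (T.filter (fun y => g y = g x)).card = n) →
    ∃ a : M → ℕ, (∀ x ∈ T, a x < n) ∧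
      ∀ i : ℕ, Set.InjOn f ↑(T.filter (fun x => a x = i)) ∧
               Set.InjOn g ↑(T.filter (fun x => a x = i)) := by
  intro n
  induction n with
  | zero =>
    intro T f g hf _
    have hT : T = ∅ := by
      by_contra h
      obtain ⟨x, hx⟩ := Finset.nonempty_of_ne_empty h
      have := hf x hx
      have : x ∈ T.filter (fun y => f y = f x) := by simp [hx]
      simp_all [Finset.card_eq_zero]
    subst hT
    exact ⟨fun _ => 0, by simp, fun i => by simp⟩
  | succ n IH =>
    intro T f g hf hg
    classical
    -- Hall setup
    set L : Finset β := T.image f with hL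
    set t : ↥L → Finset γ := fun l => (T.filter (fun y => f y = (l : β))).image g with ht
    have hall : ∀ s : Finset ↥L, s.card ≤ (s.biUnion t).card := by
      intro s
      set V := s.biUnion t with hV
      set E : Finset M := T.filter (fun y => ∃ l ∈ s, f y = (l : β)) with hE
      have hEcard : E.card = s.card * (n+1) := by
        have : E = s.biUnion (fun l => T.filter (fun y => f y = (l : β))) := by
          ext x; simp only [hE, Finset.mem_filter, Finset.mem_biUnion]; tauto
        rw [this, Finset.card_biUnion]
        · rw [Finset.sum_congr rfl (fun l hl => ?_), Finset.sum_const, smul_eq_mul]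
          obtain ⟨x, hxT, hfx⟩ : ∃ x ∈ T, f x = (l : β) := Finset.mem_image.1 l.2
          have := hf x hxT
          rw [← hfx]; exact this
        · intro l₁ _ l₂ _ hne
          refine Finset.disjoint_left.2 fun x hx1 hx2 => hne ?_
          simp only [Finset.mem_filter] at hx1 hx2
          exact Subtype.ext (by rw [← hx1.2, hx2.2])
      have hEsub : E ⊆ V.biUnion (fun c => T.filter (fun y => g y = c)) := by
        intro x hx
        simp only [hE, Finset.mem_filter] at hx
        obtain ⟨hxT, l, hls, hfl⟩ := hx
        refine Finset.mem_biUnion.2 ⟨g x, ?_, by simp [hxT]⟩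
        exact Finset.mem_biUnion.2 ⟨l, hls, Finset.mem_image.2 ⟨x, by simp [hxT, hfl], rfl⟩⟩
      have hVcard : E.card ≤ V.card * (n+1) := by
        calc E.card ≤ (V.biUnion (fun c => T.filter (fun y => g y = c))).card :=
              Finset.card_le_card hEsub
          _ ≤ ∑ c ∈ V, (T.filter (fun y => g y = c)).card := Finset.card_biUnion_le
          _ ≤ ∑ _c ∈ V, (n+1) := by
              apply Finset.sum_le_sum
              intro c hc
              simp only [hV, Finset.mem_biUnion, ht, Finset.mem_image, Finset.mem_filter] at hc
              obtain ⟨l, _, y, ⟨hyT, _⟩, hgy⟩ := hc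
              rw [← hgy]; exact le_of_eq (hg y hyT)
          _ = V.card * (n+1) := by rw [Finset.sum_const, smul_eq_mul]
      have := hEcard ▸ hVcard
      exact Nat.le_of_mul_le_mul_right this (Nat.succ_pos n)
    obtain ⟨ψ, hψinj, hψmem⟩ := (Finset.all_card_le_biUnion_card_iff_exists_injective t).1 hall
    -- choose representative edges
    have hrep : ∀ l : ↥L, ∃ x, x ∈ T ∧ f x = (l : β) ∧ g x = ψ l := by
      intro l
      have := hψmem l
      simp only [ht, Finset.mem_image, Finset.mem_filter] at this
      obtain ⟨x, ⟨hxT, hfx⟩, hgx⟩ := this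
      exact ⟨x, hxT, hfx, hgx⟩
    choose χ hχT hχf hχg using hrep
    have hχinj : Function.Injective χ := fun l₁ l₂ h => by
      apply Subtype.ext; rw [← hχf l₁, ← hχf l₂, h]
    set S : Finset M := Finset.univ.image χ with hS
    have hST : S ⊆ T := by
      intro x hx; simp only [hS, Finset.mem_image] at hx
      obtain ⟨l, _, rfl⟩ := hx; exact hχT l
    have hmemS : ∀ x ∈ S, ∃ l : ↥L, χ l = x := by
      intro x hx; simp only [hS, Finset.mem_image] at hx
      obtain ⟨l, _, rfl⟩ := hx; exact ⟨l, rfl⟩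
    have hfinjS : Set.InjOn f ↑S := by
      intro x hx y hy hxy
      obtain ⟨l₁, rfl⟩ := hmemS x (by exact_mod_cast hx)
      obtain ⟨l₂, rfl⟩ := hmemS y (by exact_mod_cast hy)
      rw [hχf, hχf] at hxy
      exact congrArg χ (Subtype.ext hxy)
    have hginjS : Set.InjOn g ↑S := by
      intro x hx y hy hxy
      obtain ⟨l₁, rfl⟩ := hmemS x (by exact_mod_cast hx)
      obtain ⟨l₂, rfl⟩ := hmemS y (by exact_mod_cast hy)
      rw [hχg, hχg] at hxy
      exact congrArg χ (hψinj hxy)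
    -- S covers every f-fiber and every g-fiber exactly once
    have hfiberf : ∀ x ∈ T, (S.filter (fun y => f y = f x)).card = 1 := by
      intro x hxT
      have hmem : f x ∈ L := Finset.mem_image.2 ⟨x, hxT, rfl⟩
      have hne : χ ⟨f x, hmem⟩ ∈ S.filter (fun y => f y = f x) := by
        refine Finset.mem_filter.2 ⟨Finset.mem_image.2 ⟨⟨f x, hmem⟩, Finset.mem_univ _, rfl⟩, ?_⟩
        exact hχf _
      refine le_antisymm ?_ (Finset.card_pos.2 ⟨_, hne⟩)
      apply Finset.card_le_one.2
      intro a ha b hb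
      simp only [Finset.mem_filter] at ha hb
      exact hfinjS (by exact_mod_cast ha.1) (by exact_mod_cast hb.1) (ha.2.trans hb.2.symm)
    -- g-values of S are all of T.image g
    have hcardL : T.card = L.card * (n+1) := by
      have : T = L.biUnion (fun l => T.filter (fun y => f y = l)) := by
        ext x
        simp only [Finset.mem_biUnion, Finset.mem_filter, hL, Finset.mem_image]
        constructor
        · intro hx; exact ⟨f x, ⟨x, hx, rfl⟩, hx, rfl⟩
        · rintro ⟨_, _, hx, _⟩; exact hx
      rw [this, Finset.card_biUnion]
      · calc ∑ l ∈ L, (T.filter (fun y => f y = l)).card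
            = ∑ _l ∈ L, (n+1) := Finset.sum_congr rfl (fun l hl => by
              obtain ⟨x, hxT, rfl⟩ := Finset.mem_image.1 hl
              exact hf x hxT)
          _ = L.card * (n+1) := by rw [Finset.sum_const, smul_eq_mul]
      · intro l₁ h₁ l₂ h₂ hne
        refine Finset.disjoint_left.2 fun x hx1 hx2 => hne ?_
        simp only [Finset.mem_filter] at hx1 hx2
        rw [← hx1.2, hx2.2]
    have hcardR : T.card = (T.image g).card * (n+1) := by
      have : T = (T.image g).biUnion (fun c => T.filter (fun y => g y = c)) := by
        ext x
        simp only [Finset.mem_biUnion, Finset.mem_filter, Finset.mem_image]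
        constructor
        · intro hx; exact ⟨g x, ⟨x, hx, rfl⟩, hx, rfl⟩
        · rintro ⟨_, _, hx, _⟩; exact hx
      conv_lhs => rw [this]
      rw [Finset.card_biUnion]
      · calc ∑ c ∈ T.image g, (T.filter (fun y => g y = c)).card
            = ∑ _c ∈ T.image g, (n+1) := Finset.sum_congr rfl (fun c hc => by
              obtain ⟨x, hxT, rfl⟩ := Finset.mem_image.1 hc
              exact hg x hxT)
          _ = (T.image g).card * (n+1) := by rw [Finset.sum_const, smul_eq_mul]
      · intro c₁ h₁ c₂ h₂ hne
        refine Finset.disjoint_left.2 fun x hx1 hx2 => hne ?_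
        simp only [Finset.mem_filter] at hx1 hx2
        rw [← hx1.2, hx2.2]
    have hcards : L.card = (T.image g).card :=
      Nat.eq_of_mul_eq_mul_right (Nat.succ_pos n) (hcardL ▸ hcardR)
    have hSimg : S.image g = T.image g := by
      apply Finset.eq_of_subset_of_card_le
      · intro c hc
        simp only [Finset.mem_image] at hc ⊢
        obtain ⟨x, hxS, rfl⟩ := hc
        exact ⟨x, hST hxS, rfl⟩
      · have h1 : (S.image g).card = S.card := by
          rw [Finset.card_image_of_injOn hginjS]
        have h2 : S.card = L.card := by
          rw [hS, Finset.card_image_of_injective _ hχinj, Finset.card_univ,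
            Fintype.card_coe]
        rw [h1, h2, hcards]
    have hfiberg : ∀ x ∈ T, (S.filter (fun y => g y = g x)).card = 1 := by
      intro x hxT
      have hmem : g x ∈ S.image g := hSimg ▸ Finset.mem_image.2 ⟨x, hxT, rfl⟩
      obtain ⟨y, hyS, hgy⟩ := Finset.mem_image.1 hmem
      have hne : y ∈ S.filter (fun z => g z = g x) := Finset.mem_filter.2 ⟨hyS, hgy⟩
      refine le_antisymm ?_ (Finset.card_pos.2 ⟨_, hne⟩)
      apply Finset.card_le_one.2
      intro a ha b hb
      simp only [Finset.mem_filter] at ha hb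
      exact hginjS (by exact_mod_cast ha.1) (by exact_mod_cast hb.1) (ha.2.trans hb.2.symm)
    -- recurse on T \ S
    have hf' : ∀ x ∈ T \ S, ((T \ S).filter (fun y => f y = f x)).card = n := by
      intro x hx
      rw [Finset.mem_sdiff] at hx
      have heq : (T \ S).filter (fun y => f y = f x)
          = T.filter (fun y => f y = f x) \ S.filter (fun y => f y = f x) := by
        ext z; simp only [Finset.mem_filter, Finset.mem_sdiff]; tauto
      rw [heq, Finset.card_sdiff_of_subset (Finset.filter_subset_filter _ hST), hf x hx.1,
        hfiberf x hx.1]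
      omega
    have hg' : ∀ x ∈ T \ S, ((T \ S).filter (fun y => g y = g x)).card = n := by
      intro x hx
      rw [Finset.mem_sdiff] at hx
      have heq : (T \ S).filter (fun y => g y = g x)
          = T.filter (fun y => g y = g x) \ S.filter (fun y => g y = g x) := by
        ext z; simp only [Finset.mem_filter, Finset.mem_sdiff]; tauto
      rw [heq, Finset.card_sdiff_of_subset (Finset.filter_subset_filter _ hST), hg x hx.1,
        hfiberg x hx.1]
      omega
    obtain ⟨a', ha'lt, ha'inj⟩ := IH (T \ S) f g hf' hg'
    refine ⟨fun x => if x ∈ S then n else a' x, ?_, ?_⟩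
    · intro x hxT
      by_cases h : x ∈ S
      · simp [h]
      · simp only [h, if_neg, if_false]
        exact lt_trans (ha'lt x (Finset.mem_sdiff.2 ⟨hxT, h⟩)) (Nat.lt_succ_self n)
    · intro i
      by_cases hi : i = n
      · have hclass : T.filter (fun x => (if x ∈ S then n else a' x) = i) = S := by
          ext x
          simp only [Finset.mem_filter]
          constructor
          · rintro ⟨hxT, hx⟩
            by_cases h : x ∈ S
            · exact h
            · exfalso
              simp only [h, if_false] at hx
              exact absurd (hx.trans hi) (Nat.ne_of_lt (ha'lt x (Finset.mem_sdiff.2 ⟨hxT, h⟩)))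
          · intro h
            exact ⟨hST h, by simp [h, hi]⟩
        rw [hclass]
        exact ⟨hfinjS, hginjS⟩
      · have hclass : T.filter (fun x => (if x ∈ S then n else a' x) = i)
            = (T \ S).filter (fun x => a' x = i) := by
          ext x
          simp only [Finset.mem_filter, Finset.mem_sdiff]
          constructor
          · rintro ⟨hxT, hx⟩
            by_cases h : x ∈ S
            · simp only [h, if_true] at hx; exact absurd hx.symm hi
            · simp only [h, if_false] at hx; exact ⟨⟨hxT, h⟩, hx⟩
          · rintro ⟨⟨hxT, hxS⟩, hx⟩
            exact ⟨hxT, by simp [hxS, hx]⟩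
        rw [hclass]
        exact ha'inj i

/-- Cardinality of a block of `n` consecutive ranks. -/
lemma block_card {α : Type*} [Fintype α] [DecidableEq α] {ρ : α → ℕ} (hρ : Function.Injective ρ)
    {N : ℕ} (himg : Finset.univ.image ρ = Finset.range N) {n b : ℕ} (hn : 0 < n)
    (hb : b * n + n ≤ N) :
    (Finset.univ.filter (fun z => ρ z / n = b)).card = n := by
  classical
  have h1 : (Finset.univ.filter (fun z => ρ z / n = b)).image ρ
      = (Finset.range N).filter (fun j => j / n = b) := by
    rw [← himg]
    exact (Finset.filter_image (p := fun j => j / n = b)).symm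
  have h2 : (Finset.range N).filter (fun j => j / n = b) = Finset.Ico (b*n) (b*n + n) := by
    ext j
    simp only [Finset.mem_filter, Finset.mem_range, Finset.mem_Ico]
    constructor
    · rintro ⟨_, rfl⟩
      exact ⟨Nat.div_mul_le_self j n, Nat.lt_div_mul_add hn⟩
    · rintro ⟨h₁, h₂⟩
      refine ⟨lt_of_lt_of_le h₂ hb, ?_⟩
      have := Nat.div_mul_le_self j n
      have := Nat.lt_div_mul_add (a := j) hn
      have h3 : j / n * n ≤ j := Nat.div_mul_le_self j n
      have h4 : j < j / n * n + n := Nat.lt_div_mul_add hn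
      rcases Nat.lt_trichotomy (j / n) b with h | h | h
      · exfalso; nlinarith
      · exact h
      · exfalso; nlinarith

  rw [← Finset.card_image_of_injective _ hρ, h1, h2, Nat.card_Ico]
  omega

/-- Threshold sets are initial segments of the rank. -/
lemma prefix_rank {M : Type*} [Fintype M] [DecidableEq M] (w : M → ℝ)
    (r : M ≃ Fin (Fintype.card M)) (hr : ∀ x y, w x < w y → (r y : ℕ) < (r x : ℕ))
    (c : ℝ) (x : M) :
    c ≤ w x ↔ (r x : ℕ) < (Finset.univ.filter (fun y => c ≤ w y)).card := by
  classical
  set P := Finset.univ.filter (fun y => c ≤ w y) with hP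
  set k := P.card with hk
  set S := P.image r with hSdef
  have hScard : S.card = k := Finset.card_image_of_injective _ r.injective
  constructor
  · intro hx
    have hxP : x ∈ P := by simp [hP, hx]
    have hsub : Finset.Iic (r x) ⊆ S := by
      intro t ht
      rw [Finset.mem_Iic] at ht
      set y := r.symm t with hy
      have hty : r y = t := r.apply_symm_apply t
      by_cases hyP : y ∈ P
      · exact Finset.mem_image.2 ⟨y, hyP, hty⟩
      · exfalso
        have hwy : w y < c := by
          simp only [hP, Finset.mem_filter, Finset.mem_univ, true_and] at hyP
          exact lt_of_not_ge hyP
        have := hr y x (lt_of_lt_of_le hwy hx)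
        rw [hty] at this
        exact absurd (Fin.lt_def.2 this) (not_lt.2 ht)
    have := Finset.card_le_card hsub
    rw [Fin.card_Iic, hScard] at this
    omega
  · intro hx
    by_contra hxP
    have hxP' : x ∉ P := by simp [hP, hxP]
    have hsub : S ⊆ Finset.Iio (r x) := by
      intro t ht
      obtain ⟨y, hyP, rfl⟩ := Finset.mem_image.1 ht
      rw [Finset.mem_Iio]
      have hwy : c ≤ w y := by
        simp only [hP, Finset.mem_filter, Finset.mem_univ, true_and] at hyP
        exact hyP
      have hwx : w x < c := lt_of_not_ge hxP
      have := hr x y (lt_of_lt_of_le hwx hwy)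
      exact Fin.lt_def.2 this
    have := Finset.card_le_card hsub
    rw [Fin.card_Iio, hScard] at this
    omega

lemma count_lemma {M : Type*} [Fintype M] [DecidableEq M] {n : ℕ} (hn : 0 < n)
    (r : M ≃ Fin (Fintype.card M)) (a : M → ℕ) (ha : ∀ x, a x < n)
    (hinj : ∀ i : ℕ, Set.InjOn (fun x => (r x : ℕ) / n) ↑(Finset.univ.filter (fun x => a x = i)))
    {i : ℕ} (hi : i < n) (j : ℕ) {k : ℕ} (hk : k ≤ Fintype.card M) :
    (Finset.univ.filter (fun x => a x = j ∧ (r x : ℕ) < k)).card ≤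
      (Finset.univ.filter (fun x => a x = i ∧ (r x : ℕ) < k)).card + 1 := by
  classical
  have hm : Fintype.card M = Fintype.card M := rfl
  set q := k / n with hq
  have himg : Finset.univ.image (fun x : M => (r x : ℕ)) = Finset.range (Fintype.card M) := by
    ext t
    simp only [Finset.mem_image, Finset.mem_range, Finset.mem_univ, true_and]
    constructor
    · rintro ⟨x, rfl⟩; exact (r x).2
    · intro ht; exact ⟨r.symm ⟨t, ht⟩, by simp⟩
  have hrinj : Function.Injective (fun x : M => (r x : ℕ)) :=
    fun x y hxy => r.injective (Fin.ext hxy)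
  -- upper bound for j
  have hupper : (Finset.univ.filter (fun x => a x = j ∧ (r x : ℕ) < k)).card ≤ q + 1 := by
    have hiimg : Set.InjOn (fun x => (r x : ℕ) / n)
        ↑(Finset.univ.filter (fun x => a x = j ∧ (r x : ℕ) < k)) := by
      apply (hinj j).mono
      intro x hx
      simp only [Finset.coe_filter, Set.mem_setOf_eq] at hx ⊢
      exact ⟨hx.1, hx.2.1⟩
    rw [← Finset.card_image_of_injOn hiimg]
    apply le_trans (Finset.card_le_card (t := Finset.range (q + 1)) ?_)
    · simp
    · intro b hb
      simp only [Finset.mem_image, Finset.mem_filter, Finset.mem_univ, true_and,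
        Finset.mem_range] at hb ⊢
      obtain ⟨x, ⟨_, hxk⟩, rfl⟩ := hb
      rw [Nat.div_lt_iff_lt_mul hn]
      calc (r x : ℕ) < k := hxk
        _ ≤ (q + 1) * n := by
            rw [hq]
            have h1 := Nat.div_add_mod k n
            have h2 := Nat.mod_lt k hn
            nlinarith
  -- lower bound for i
  have hlower : q ≤ (Finset.univ.filter (fun x => a x = i ∧ (r x : ℕ) < k)).card := by
    have hsub : Finset.range q ⊆
        (Finset.univ.filter (fun x => a x = i ∧ (r x : ℕ) < k)).image
          (fun x => (r x : ℕ) / n) := by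
      intro b hb
      rw [Finset.mem_range] at hb
      have hbn : b * n + n ≤ Fintype.card M := by
        have h1 : (b + 1) * n ≤ q * n := Nat.mul_le_mul_right n hb
        have h2 : q * n ≤ k := by rw [hq]; exact Nat.div_mul_le_self k n
        have := le_trans h1 (le_trans h2 hk)
        nlinarith
      have hblock : (Finset.univ.filter (fun x : M => (r x : ℕ) / n = b)).card = n :=
        block_card hrinj himg hn hbn
      -- a is injective on the block
      have hainj : Set.InjOn a ↑(Finset.univ.filter (fun x : M => (r x : ℕ) / n = b)) := by
        intro x hx y hy hxy
        simp only [Finset.coe_filter, Set.mem_setOf_eq] at hx hy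
        refine hinj (a x) ?_ ?_ (hx.2.trans hy.2.symm)
        · simp
        · simp [hxy]
      have himgblock : (Finset.univ.filter (fun x : M => (r x : ℕ) / n = b)).image a
          = Finset.range n := by
        apply Finset.eq_of_subset_of_card_le
        · intro c hc
          simp only [Finset.mem_image] at hc
          obtain ⟨x, _, rfl⟩ := hc
          exact Finset.mem_range.2 (ha x)
        · rw [Finset.card_range, Finset.card_image_of_injOn hainj, hblock]
      have : i ∈ (Finset.univ.filter (fun x : M => (r x : ℕ) / n = b)).image a := by
        rw [himgblock]; exact Finset.mem_range.2 hi
      obtain ⟨x, hxb, hxa⟩ := Finset.mem_image.1 this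
      simp only [Finset.mem_filter, Finset.mem_univ, true_and] at hxb
      refine Finset.mem_image.2 ⟨x, ?_, hxb⟩
      simp only [Finset.mem_filter, Finset.mem_univ, true_and]
      refine ⟨hxa, ?_⟩
      have : (r x : ℕ) < (b + 1) * n := by
        rw [← hxb] at *
        have := Nat.lt_div_mul_add (a := (r x : ℕ)) hn
        nlinarith
      calc (r x : ℕ) < (b+1) * n := this
        _ ≤ q * n := Nat.mul_le_mul_right n hb
        _ ≤ k := by rw [hq]; exact Nat.div_mul_le_self k n
    calc q = (Finset.range q).card := (Finset.card_range q).symm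
      _ ≤ _ := Finset.card_le_card hsub
      _ ≤ _ := Finset.card_image_le
  omega


lemma sd_of_blocks {M : Type*} [Fintype M] [DecidableEq M] {n : ℕ} (hn : 0 < n)
    (w : M → ℝ) (r : M ≃ Fin (Fintype.card M))
    (hr : ∀ x y, w x < w y → (r y : ℕ) < (r x : ℕ))
    (a : M → ℕ) (ha : ∀ x, a x < n)
    (hinj : ∀ i : ℕ, Set.InjOn (fun x => (r x : ℕ) / n) ↑(Finset.univ.filter (fun x => a x = i)))
    {i : ℕ} (hi : i < n) (j : ℕ) :
    sdPair w (Finset.univ.filter (fun x => a x = i)) (Finset.univ.filter (fun x => a x = j)) := by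
  classical
  by_cases hY : Finset.univ.filter (fun x => a x = j) = ∅
  · exact Or.inl hY
  right
  obtain ⟨g, hgY, hgmax⟩ := Finset.exists_max_image _ w (Finset.nonempty_of_ne_empty hY)
  refine ⟨g, hgY, fun h => ?_⟩
  set k := (Finset.univ.filter (fun y => w h ≤ w y)).card with hk
  have hkm : k ≤ Fintype.card M := (Finset.card_filter_le _ _).trans (by simp)
  have hchar : ∀ x : M, w h ≤ w x ↔ (r x : ℕ) < k := prefix_rank w r hr (w h)
  by_cases hg : w h ≤ w g
  · have hYf : (Finset.univ.filter (fun x => a x = j)).filter (fun x => w h ≤ w x)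
        = Finset.univ.filter (fun x => a x = j ∧ (r x : ℕ) < k) := by
      ext x
      simp only [Finset.mem_filter, Finset.mem_univ, true_and, hchar x]
    have hXf : (Finset.univ.filter (fun x => a x = i)).filter (fun x => w h ≤ w x)
        = Finset.univ.filter (fun x => a x = i ∧ (r x : ℕ) < k) := by
      ext x
      simp only [Finset.mem_filter, Finset.mem_univ, true_and, hchar x]
    rw [Finset.filter_erase, hYf, hXf]
    have hgmem : g ∈ Finset.univ.filter (fun x => a x = j ∧ (r x : ℕ) < k) := by
      simp only [Finset.mem_filter, Finset.mem_univ, true_and]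
      simp only [Finset.mem_filter, Finset.mem_univ, true_and] at hgY
      exact ⟨hgY, (hchar g).1 hg⟩
    rw [Finset.card_erase_of_mem hgmem]
    have := count_lemma hn r a ha hinj hi j hkm
    omega
  · have hempty : ((Finset.univ.filter (fun x => a x = j)).erase g).filter
        (fun x => w h ≤ w x) = ∅ := by
      apply Finset.filter_false_of_mem
      intro x hx
      have hxY := Finset.mem_of_mem_erase hx
      intro hcon
      exact hg (hcon.trans (hgmax x hxY))
    rw [hempty]
    simp

/-- A ranking of the goods, strictly compatible with a valuation. -/
lemma exists_rank {M : Type*} [Fintype M] [DecidableEq M] (w : M → ℝ) :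
    ∃ r : M ≃ Fin (Fintype.card M), ∀ x y, w x < w y → (r y : ℕ) < (r x : ℕ) := by
  classical
  set eF := Fintype.equivFin M with heF
  set f : Fin (Fintype.card M) → ℝ := fun i => -(w (eF.symm i)) with hf
  set σ := Tuple.sort f with hσ
  refine ⟨eF.trans σ.symm, ?_⟩
  intro x y hxy
  by_contra hcon
  push_neg at hcon
  have hle : (eF.trans σ.symm) x ≤ (eF.trans σ.symm) y := by
    rw [Fin.le_def]; exact hcon
  have hmono := Tuple.monotone_sort f hle
  have hmono' : f (eF x) ≤ f (eF y) := by
    simpa [← hσ, Function.comp_apply, Equiv.trans_apply, Equiv.apply_symm_apply] using hmono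
  rw [hf] at hmono'
  simp only [Equiv.symm_apply_apply] at hmono'
  have : w y ≤ w x := by linarith
  exact absurd hxy (not_lt.2 this)

def padRank {M : Type*} [Fintype M] (d : ℕ) (r : M ≃ Fin (Fintype.card M)) : M ⊕ Fin d → ℕ
  | Sum.inl x => (r x : ℕ)
  | Sum.inr t => Fintype.card M + (t : ℕ)

lemma pad_fiber {M : Type*} [Fintype M] [DecidableEq M] {n d B : ℕ} (hn : 0 < n)
    (hB : Fintype.card M + d = n * B) (r : M ≃ Fin (Fintype.card M)) (z : M ⊕ Fin d) :
    (Finset.univ.filter (fun y : M ⊕ Fin d =>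
        padRank d r y / n = padRank d r z / n)).card = n := by
  classical
  have hρinj : Function.Injective (padRank d r) := by
    intro z₁ z₂ h
    match z₁, z₂ with
    | Sum.inl x, Sum.inl y =>
      simp only [padRank] at h
      exact congrArg Sum.inl (r.injective (Fin.ext h))
    | Sum.inl x, Sum.inr t =>
      exfalso
      simp only [padRank] at h
      have := (r x).2
      omega
    | Sum.inr t, Sum.inl x =>
      exfalso
      simp only [padRank] at h
      have := (r x).2
      omega
    | Sum.inr t₁, Sum.inr t₂ =>
      simp only [padRank] at h
      exact congrArg Sum.inr (Fin.ext (by omega))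
  have himg : Finset.univ.image (padRank d r) = Finset.range (Fintype.card M + d) := by
    ext j
    simp only [Finset.mem_image, Finset.mem_range, Finset.mem_univ, true_and]
    constructor
    · rintro ⟨z₀, rfl⟩
      match z₀ with
      | Sum.inl x => simp only [padRank]; have := (r x).2; omega
      | Sum.inr t => simp only [padRank]; have := t.2; omega
    · intro hj
      by_cases hjm : j < Fintype.card M
      · exact ⟨Sum.inl (r.symm ⟨j, hjm⟩), by simp [padRank]⟩
      · exact ⟨Sum.inr ⟨j - Fintype.card M, by omega⟩, by simp only [padRank]; omega⟩
  have hz : padRank d r z < Fintype.card M + d := by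
    have : padRank d r z ∈ Finset.range (Fintype.card M + d) := by
      rw [← himg]; exact Finset.mem_image.2 ⟨z, Finset.mem_univ _, rfl⟩
    exact Finset.mem_range.1 this
  have hb : (padRank d r z / n) * n + n ≤ Fintype.card M + d := by
    have h1 : padRank d r z / n < B := by
      rw [Nat.div_lt_iff_lt_mul hn]
      calc padRank d r z < Fintype.card M + d := hz
        _ = n * B := hB
        _ = B * n := Nat.mul_comm n B
    calc (padRank d r z / n) * n + n = (padRank d r z / n + 1) * n := by ring
      _ ≤ B * n := Nat.mul_le_mul_right n h1
      _ = Fintype.card M + d := by rw [Nat.mul_comm]; exact hB.symm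
  exact block_card hρinj himg hn hb

lemma exists_coloring {M : Type*} [Fintype M] [DecidableEq M] {n : ℕ} (hn : 0 < n)
    (r₁ r₂ : M ≃ Fin (Fintype.card M)) :
    ∃ a : M → ℕ, (∀ x, a x < n) ∧
      (∀ i, Set.InjOn (fun x => (r₁ x : ℕ) / n) ↑(Finset.univ.filter (fun x => a x = i))) ∧
      (∀ i, Set.InjOn (fun x => (r₂ x : ℕ) / n) ↑(Finset.univ.filter (fun x => a x = i))) := by
  classical
  have hpad : ∃ d B, Fintype.card M + d = n * B := by
    rcases Nat.eq_zero_or_pos (Fintype.card M % n) with h0 | h0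
    · exact ⟨0, Fintype.card M / n,
        by rw [Nat.add_zero, Nat.mul_div_cancel' (Nat.dvd_of_mod_eq_zero h0)]⟩
    · refine ⟨n - Fintype.card M % n, Fintype.card M / n + 1, ?_⟩
      have h := Nat.div_add_mod (Fintype.card M) n
      have h2 : Fintype.card M % n < n := Nat.mod_lt _ hn
      rw [Nat.mul_add, Nat.mul_one]
      calc Fintype.card M + (n - Fintype.card M % n)
          = (n * (Fintype.card M / n) + Fintype.card M % n) + (n - Fintype.card M % n) :=
            congrArg (fun t => t + (n - Fintype.card M % n)) h.symm
        _ = n * (Fintype.card M / n) + (Fintype.card M % n + (n - Fintype.card M % n)) := by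
            ring
        _ = n * (Fintype.card M / n) + n := by rw [Nat.add_sub_cancel' h2.le]
  obtain ⟨d, B, hB⟩ := hpad
  obtain ⟨a', ha'lt, ha'inj⟩ := color_lemma n (Finset.univ : Finset (M ⊕ Fin d))
    (fun z => padRank d r₁ z / n) (fun z => padRank d r₂ z / n)
    (fun z _ => pad_fiber hn hB r₁ z) (fun z _ => pad_fiber hn hB r₂ z)
  refine ⟨fun x => a' (Sum.inl x), fun x => ha'lt _ (Finset.mem_univ _), ?_, ?_⟩
  · intro i x hx y hy hxy
    simp only [Finset.coe_filter, Set.mem_setOf_eq] at hx hy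
    have h1 : Sum.inl x ∈ ↑(Finset.univ.filter (fun z => a' z = i)) := by
      simp [hx.2]
    have h2 : Sum.inl y ∈ ↑(Finset.univ.filter (fun z => a' z = i)) := by
      simp [hy.2]
    have := (ha'inj i).1 h1 h2 (by simpa [padRank] using hxy)
    exact Sum.inl.inj this
  · intro i x hx y hy hxy
    simp only [Finset.coe_filter, Set.mem_setOf_eq] at hx hy
    have h1 : Sum.inl x ∈ ↑(Finset.univ.filter (fun z => a' z = i)) := by
      simp [hx.2]
    have h2 : Sum.inl y ∈ ↑(Finset.univ.filter (fun z => a' z = i)) := by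
      simp [hy.2]
    have := (ha'inj i).2 h1 h2 (by simpa [padRank] using hxy)
    exact Sum.inl.inj this

/-- When all agents' additive subjective utilities induce the same ranking over
the goods, there exists an allocation that is SD-EF1 with respect to all
subjective utilities and SD-EF1 with respect to the market valuation. -/
theorem stmt_4 {n : ℕ} (hn : 0 < n) {M : Type*} [Fintype M] [DecidableEq M]
    (u : Fin n → M → ℝ) (v : M → ℝ)
    (hnn : ∀ i g, 0 ≤ u i g) (hnnv : ∀ g, 0 ≤ v g)
    (hsame : ∀ i j (g g' : M), u i g ≤ u i g' ↔ u j g ≤ u j g') :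
    ∃ A : Fin n → Finset M, (∀ g : M, ∃! i, g ∈ A i) ∧
      (∀ i j, sdPair (u i) (A i) (A j)) ∧
      (∀ i j, sdPair v (A i) (A j)) := by
  classical
  set i₀ : Fin n := ⟨0, hn⟩ with hi₀
  obtain ⟨r₁, hr₁⟩ := exists_rank (u i₀)
  obtain ⟨r₂, hr₂⟩ := exists_rank v
  obtain ⟨a, ha, hinj₁, hinj₂⟩ := exists_coloring hn r₁ r₂
  refine ⟨fun i => Finset.univ.filter (fun x => a x = i.val), ?_, ?_, ?_⟩
  · intro g
    refine ⟨⟨a g, ha g⟩, by simp, ?_⟩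
    intro i hi
    simp only [Finset.mem_filter, Finset.mem_univ, true_and] at hi
    exact Fin.ext hi.symm
  · intro i j
    have hru : ∀ x y, u i x < u i y → (r₁ y : ℕ) < (r₁ x : ℕ) := by
      intro x y hxy
      apply hr₁
      exact lt_of_not_ge (fun hle => absurd ((hsame i₀ i y x).1 hle) (not_le.2 hxy))
    exact sd_of_blocks hn (u i) r₁ hru a ha hinj₁ i.2 j.val
  · intro i j
    exact sd_of_blocks hn v r₂ hr₂ a ha hinj₂ i.2 j.val
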